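/- Let N, M, K be positive natural numbers, let c > 0 be a real number, let V ∈ ℂ^{N×M} satisfy V^H V = c·I_M, let B ∈ ℂ^{N×K} with V^H B ≠ 0, and let β > 0. Then W* = √β · V^H B / ‖V^H B‖_F is the unique global minimizer of the function W ↦ ‖B − V W‖_F² over the set {W ∈ ℂ^{M×K} : ‖W‖_F² = β}. -/

import Mathlib

open Matrix
open scoped BigOperators


private lemma normSq' (z : ℂ) : ‖z‖ ^ 2 = ((starRingEnd ℂ) z * z).re := by
  simp [Complex.sq_norm, Complex.normSq_apply, Complex.mul_re]

private lemma norm_sq_sub' (x y : ℂ) :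
    ‖x - y‖ ^ 2 = ‖x‖ ^ 2 - 2 * ((starRingEnd ℂ) x * y).re + ‖y‖ ^ 2 := by
  simp only [normSq']
  simp [Complex.mul_re, Complex.sub_re, Complex.sub_im]
  ring

private lemma trace_re' {n k : ℕ} (X Y : Matrix (Fin n) (Fin k) ℂ) :
    (Matrix.trace (Xᴴ * Y)).re = ∑ i, ∑ j, ((starRingEnd ℂ) (X i j) * Y i j).re := by
  rw [Finset.sum_comm]
  simp [Matrix.trace, Matrix.diag, Matrix.mul_apply, Matrix.conjTranspose_apply,
    Complex.re_sum]

private lemma frob' {n k : ℕ} (X : Matrix (Fin n) (Fin k) ℂ) :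
    ∑ i, ∑ j, ‖X i j‖ ^ 2 = (Matrix.trace (Xᴴ * X)).re := by
  rw [trace_re']
  simp [normSq', Complex.sq_norm, Complex.normSq_apply, Complex.mul_re]

private lemma expand' {n k : ℕ} (X Y : Matrix (Fin n) (Fin k) ℂ) :
    ∑ i, ∑ j, ‖(X - Y) i j‖ ^ 2
      = (∑ i, ∑ j, ‖X i j‖ ^ 2) - 2 * (Matrix.trace (Xᴴ * Y)).re
        + ∑ i, ∑ j, ‖Y i j‖ ^ 2 := by
  simp only [Matrix.sub_apply, norm_sq_sub', trace_re', Finset.mul_sum,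
    Finset.sum_add_distrib, Finset.sum_sub_distrib]
/-- The closed-form digital precoder (50) for the partially connected architecture:
if VᴴV = c·I, VᴴB ≠ 0 and β > 0, then W* = √β·VᴴB/‖VᴴB‖_F is the unique global
minimizer of ‖B − VW‖_F² over the sphere ‖W‖_F² = β. -/
theorem stmt12 (N M K : ℕ) (hN : 0 < N) (hM : 0 < M) (hK : 0 < K)
    (c : ℝ) (hc : 0 < c)
    (V : Matrix (Fin N) (Fin M) ℂ)
    (hV : Vᴴ * V = ((c : ℝ) : ℂ) • (1 : Matrix (Fin M) (Fin M) ℂ))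
    (B : Matrix (Fin N) (Fin K) ℂ) (hVB : Vᴴ * B ≠ 0)
    (β : ℝ) (hβ : 0 < β)
    (Wstar : Matrix (Fin M) (Fin K) ℂ)
    (hW : Wstar = ((Real.sqrt β / Real.sqrt (∑ j, ∑ k, ‖(Vᴴ * B) j k‖ ^ 2) : ℝ) : ℂ)
      • (Vᴴ * B)) :
    (∑ j, ∑ k, ‖Wstar j k‖ ^ 2) = β ∧
    (∀ W : Matrix (Fin M) (Fin K) ℂ, (∑ j, ∑ k, ‖W j k‖ ^ 2) = β →
      (∑ i, ∑ k, ‖(B - V * Wstar) i k‖ ^ 2) ≤ ∑ i, ∑ k, ‖(B - V * W) i k‖ ^ 2) ∧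
    (∀ W : Matrix (Fin M) (Fin K) ℂ, (∑ j, ∑ k, ‖W j k‖ ^ 2) = β →
      (∑ i, ∑ k, ‖(B - V * W) i k‖ ^ 2) = (∑ i, ∑ k, ‖(B - V * Wstar) i k‖ ^ 2) →
      W = Wstar) := by
  set A : Matrix (Fin M) (Fin K) ℂ := Vᴴ * B with hA
  set S : ℝ := ∑ j, ∑ k, ‖A j k‖ ^ 2 with hSdef
  -- S > 0
  have hS : 0 < S := by
    have hS0 : (0:ℝ) ≤ S := Finset.sum_nonneg fun j _ => Finset.sum_nonneg
      fun k _ => sq_nonneg _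
    rcases hS0.lt_or_eq with h | h
    · exact h
    · exfalso; apply hVB
      ext j k
      have h1 := (Finset.sum_eq_zero_iff_of_nonneg
        (fun j _ => Finset.sum_nonneg fun k _ => sq_nonneg ‖A j k‖)).1 h.symm
        j (Finset.mem_univ j)
      have h2 := (Finset.sum_eq_zero_iff_of_nonneg
        (fun k _ => sq_nonneg ‖A j k‖)).1 h1 k (Finset.mem_univ k)
      have : ‖A j k‖ = 0 := by
        have := sq_eq_zero_iff.1 h2; exact this
      simpa using norm_eq_zero.1 this
  set r : ℝ := Real.sqrt β / Real.sqrt S with hrdef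
  have hr : 0 < r := div_pos (Real.sqrt_pos.2 hβ) (Real.sqrt_pos.2 hS)
  have hr2 : r ^ 2 = β / S := by
    rw [hrdef, div_pow, Real.sq_sqrt hβ.le, Real.sq_sqrt hS.le]
  -- part 1: norm of Wstar
  have h1 : (∑ j, ∑ k, ‖Wstar j k‖ ^ 2) = β := by
    rw [hW]
    simp only [Matrix.smul_apply, smul_eq_mul, norm_mul, Complex.norm_real,
      Real.norm_eq_abs, abs_of_pos hr, mul_pow]
    simp only [← Finset.mul_sum, ← hSdef, hr2]
    field_simp
  -- the quadratic-term identity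
  have hquad : ∀ W : Matrix (Fin M) (Fin K) ℂ,
      ∑ i, ∑ k, ‖(V * W) i k‖ ^ 2 = c * ∑ j, ∑ k, ‖W j k‖ ^ 2 := by
    intro W
    rw [frob', frob' W]
    have : (V * W)ᴴ * (V * W) = ((c : ℝ) : ℂ) • (Wᴴ * W) := by
      rw [conjTranspose_mul, Matrix.mul_assoc, ← Matrix.mul_assoc Vᴴ V W, hV,
        Matrix.smul_mul, Matrix.one_mul, Matrix.mul_smul]
    rw [this, Matrix.trace_smul]
    simp [Complex.smul_re]
  -- the cross-term identity
  have hcross : ∀ W : Matrix (Fin M) (Fin K) ℂ,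
      Matrix.trace (Bᴴ * (V * W)) = Matrix.trace (Aᴴ * W) := by
    intro W
    rw [hA, conjTranspose_mul, conjTranspose_conjTranspose, Matrix.mul_assoc]
  -- the expansion of the objective
  have hf : ∀ W : Matrix (Fin M) (Fin K) ℂ, (∑ j, ∑ k, ‖W j k‖ ^ 2) = β →
      ∑ i, ∑ k, ‖(B - V * W) i k‖ ^ 2
        = (∑ i, ∑ k, ‖B i k‖ ^ 2) + c * β - 2 * (Matrix.trace (Aᴴ * W)).re := by
    intro W hWn
    rw [expand', hquad, hWn, hcross]
    ring
  -- trace with Wstar : r times trace with A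
  have hWtr : ∀ W : Matrix (Fin M) (Fin K) ℂ,
      (Matrix.trace (Wstarᴴ * W)).re = r * (Matrix.trace (Aᴴ * W)).re := by
    intro W
    rw [hW, conjTranspose_smul, Matrix.smul_mul, Matrix.trace_smul]
    simp [Complex.smul_re, Complex.conj_ofReal]
  -- distance expansion
  have hD : ∀ W : Matrix (Fin M) (Fin K) ℂ, (∑ j, ∑ k, ‖W j k‖ ^ 2) = β →
      ∑ j, ∑ k, ‖(Wstar - W) j k‖ ^ 2
        = 2 * β - 2 * r * (Matrix.trace (Aᴴ * W)).re := by
    intro W hWn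
    rw [expand', hWtr, h1, hWn]
    ring
  -- key comparison
  have hkey : ∀ W : Matrix (Fin M) (Fin K) ℂ, (∑ j, ∑ k, ‖W j k‖ ^ 2) = β →
      (∑ i, ∑ k, ‖(B - V * W) i k‖ ^ 2)
        = (∑ i, ∑ k, ‖(B - V * Wstar) i k‖ ^ 2)
          + (∑ j, ∑ k, ‖(Wstar - W) j k‖ ^ 2) / r := by
    intro W hWn
    have hDW := hD W hWn
    have hDs := hD Wstar h1
    have hDs0 : ∑ j, ∑ k, ‖(Wstar - Wstar) j k‖ ^ 2 = 0 := by simp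
    rw [hf W hWn, hf Wstar h1, hDW]
    rw [hDs0] at hDs
    -- from hDs : 0 = 2β - 2 r (trace (Aᴴ Wstar)).re
    have hts : (Matrix.trace (Aᴴ * Wstar)).re = β / r := by
      field_simp
      linarith
    rw [hts]
    field_simp
    ring
  refine ⟨h1, fun W hWn => ?_, fun W hWn heq => ?_⟩
  · rw [hkey W hWn]
    have : 0 ≤ (∑ j, ∑ k, ‖(Wstar - W) j k‖ ^ 2) / r :=
      div_nonneg (Finset.sum_nonneg fun j _ => Finset.sum_nonneg fun k _ => sq_nonneg _) hr.le
    linarith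
  · have := hkey W hWn
    rw [heq] at this
    have hz : (∑ j, ∑ k, ‖(Wstar - W) j k‖ ^ 2) = 0 := by
      have h' : (∑ j, ∑ k, ‖(Wstar - W) j k‖ ^ 2) / r = 0 := by linarith
      field_simp at h'
      linarith
    have hz1 := (Finset.sum_eq_zero_iff_of_nonneg
      (fun j _ => Finset.sum_nonneg fun k _ => sq_nonneg ‖(Wstar - W) j k‖)).1 hz
    ext j k
    have hz2 := (Finset.sum_eq_zero_iff_of_nonneg
      (fun k _ => sq_nonneg ‖(Wstar - W) j k‖)).1 (hz1 j (Finset.mem_univ j))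
      k (Finset.mem_univ k)
    have : ‖(Wstar - W) j k‖ = 0 := sq_eq_zero_iff.1 hz2
    have := norm_eq_zero.1 this
    rw [Matrix.sub_apply, sub_eq_zero] at this
    exact this.symm
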